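/- In the common-favorites swap Schelling game on a regular network (for any tolerance parameter τ ∈ [0,1] and any window size w ≥ 1), the number of colored pairs Φ is an ordinal potential function: if G is such that every node has the same number k of nodes within distance w (|N_w(u)| = k for all u ∈ V), and all agents share the same favorite node, then for every bijective placement p and every improving swap producing the placement p', one has Φ(p') < Φ(p). Consequently the cf-SSG on regular networks is a potential game. -/

import Mathlib

open SimpleGraph Finset

namespace Schelling

variable {V I : Type*}

/-- The `w`-neighborhood of a node `u`: all nodes `v ≠ u` with `d_G(u,v) ≤ w`. -/
def nbhd (G : SimpleGraph V) (w : ℕ) (u : V) : Set V :=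
  {v | v ≠ u ∧ G.dist u v ≤ w}

/-- `|N⁺(p(x))|`: number of nodes in the `w`-neighborhood of `p x` occupied by
agents of the same type as `x`. -/
noncomputable def sCount (G : SimpleGraph V) (w : ℕ) (tp : I → Bool) (p : I → V) (x : I) : ℕ :=
  {v | v ∈ nbhd G w (p x) ∧ ∃ y, p y = v ∧ tp y = tp x}.ncard

/-- `|N⁻(p(x))|`: number of nodes in the `w`-neighborhood of `p x` occupied by
agents of the other type. -/
noncomputable def dCount (G : SimpleGraph V) (w : ℕ) (tp : I → Bool) (p : I → V) (x : I) : ℕ :=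
  {v | v ∈ nbhd G w (p x) ∧ ∃ y, p y = v ∧ tp y ≠ tp x}.ncard

/-- An agent is isolated if no node of its neighborhood is occupied. -/
def isolated (G : SimpleGraph V) (w : ℕ) (tp : I → Bool) (p : I → V) (x : I) : Prop :=
  sCount G w tp p x + dCount G w tp p x = 0

/-- The (scalar) cost of agent `x`: `τ` if isolated, otherwise
`max 0 (τ - |N⁺|/(|N⁺| + |N⁻|))`. -/
noncomputable def ucost (G : SimpleGraph V) (w : ℕ) (τ : ℝ) (tp : I → Bool) (p : I → V)
    (x : I) : ℝ :=
  if sCount G w tp p x + dCount G w tp p x = 0 then τ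
  else max 0 (τ - (sCount G w tp p x : ℝ) / ((sCount G w tp p x : ℝ) + (dCount G w tp p x : ℝ)))

/-- An agent is happy if it is not isolated and its local happiness ratio is at least `τ`. -/
def happy (G : SimpleGraph V) (w : ℕ) (τ : ℝ) (tp : I → Bool) (p : I → V) (x : I) : Prop :=
  sCount G w tp p x + dCount G w tp p x ≠ 0 ∧
    τ ≤ (sCount G w tp p x : ℝ) / ((sCount G w tp p x : ℝ) + (dCount G w tp p x : ℝ))

/-- The vector cost of agent `x`: scalar cost together with `d_G(fav_x, p x) + 1`,
to be compared lexicographically. -/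
noncomputable def vcost (G : SimpleGraph V) (w : ℕ) (τ : ℝ) (tp : I → Bool) (fav : I → V)
    (p : I → V) (x : I) : ℝ × ℕ :=
  (ucost G w τ tp p x, G.dist (fav x) (p x) + 1)

/-- The number of colored pairs `Φ(p) = (1/2) · Σ_x |N⁻(p(x))|`. -/
noncomputable def Phi [Fintype I] (G : SimpleGraph V) (w : ℕ) (tp : I → Bool) (p : I → V) : ℝ :=
  (1 / 2) * ∑ x : I, (dCount G w tp p x : ℝ)

/-- The pair potential `(Φ(p), Σ_x d_G(fav_x, p x))`, compared lexicographically. -/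
noncomputable def PhiPair [Fintype I] (G : SimpleGraph V) (w : ℕ) (tp : I → Bool) (fav : I → V)
    (p : I → V) : ℝ × ℕ :=
  (Phi G w tp p, ∑ x : I, G.dist (fav x) (p x))

/-- The placement obtained from `p` by swapping the locations of agents `x` and `y`. -/
def swapP [DecidableEq I] (p : I → V) (x y : I) : I → V := p ∘ Equiv.swap x y

/-- The agents of type `A`. -/
def typeA [Fintype I] (tp : I → Bool) : Finset I := Finset.univ.filter (fun i => tp i = true)

/-- The agents of type `B`. -/
def typeB [Fintype I] (tp : I → Bool) : Finset I := Finset.univ.filter (fun i => tp i = false)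

/-- A placement is stable for the uniform SSG if no pair of agents can both strictly
decrease their cost by swapping. -/
def uStable (G : SimpleGraph V) (w : ℕ) (τ : ℝ) (tp : I → Bool) (p : I → V)
    [DecidableEq I] : Prop :=
  ∀ x y : I, ¬ (ucost G w τ tp (swapP p x y) x < ucost G w τ tp p x ∧
                ucost G w τ tp (swapP p x y) y < ucost G w τ tp p y)

/-- A placement is stable for the SSG with favorite nodes if no pair of agents can both
strictly lexicographically decrease their cost vector by swapping. -/
def vStable (G : SimpleGraph V) (w : ℕ) (τ : ℝ) (tp : I → Bool) (fav : I → V) (p : I → V)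
    [DecidableEq I] : Prop :=
  ∀ x y : I, ¬ (toLex (vcost G w τ tp fav (swapP p x y) x) < toLex (vcost G w τ tp fav p x) ∧
                toLex (vcost G w τ tp fav (swapP p x y) y) < toLex (vcost G w τ tp fav p y))



open Classical in
/-- The weight of the (ordered) pair of nodes `(u,v)` in the jump-game potential:
`1` if both are occupied by agents of different types, `1/3` if at least one is empty,
and `0` otherwise. -/
noncomputable def edgeW (tp : I → Bool) (p : I → V) (u v : V) : ℝ :=
  if ∃ x y : I, p x = u ∧ p y = v ∧ tp x ≠ tp y then 1
  else if (∀ x : I, p x ≠ u) ∨ (∀ y : I, p y ≠ v) then 1 / 3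
  else 0

open Classical in
/-- The edge-weight potential `Φ(p) = Σ_{e ∈ E} w_e(p)`, written as half the sum over
ordered adjacent pairs (each edge is counted twice, and `edgeW` is symmetric). -/
noncomputable def jumpPhi [Fintype V] (G : SimpleGraph V) (tp : I → Bool) (p : I → V) : ℝ :=
  (1 / 2) * ∑ u : V, ∑ v : V, if G.Adj u v then edgeW tp p u v else 0

/-- A placement is stable for the uniform JSG if no agent can strictly decrease her cost
by jumping to an empty node. -/
def jStable (G : SimpleGraph V) (w : ℕ) (τ : ℝ) (tp : I → Bool) (p : I → V)
    [DecidableEq I] : Prop :=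
  ∀ (x : I) (v : V), v ∉ Set.range p →
    ¬ (ucost G w τ tp (Function.update p x v) x < ucost G w τ tp p x)

/-- The social cost of a placement: the number of unhappy agents together with the total
distance cost, compared lexicographically. -/
noncomputable def socialCost [Fintype I] (G : SimpleGraph V) (w : ℕ) (τ : ℝ) (tp : I → Bool)
    (fav : I → V) (p : I → V) : ℕ × ℕ :=
  ({x : I | ¬ happy G w τ tp p x}.ncard, ∑ x : I, (G.dist (fav x) (p x) + 1))


end Schelling

open Schelling


private lemma ncard_cast_sum {V : Type*} [Fintype V] (S : Set V) [DecidablePred (· ∈ S)] :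
    ((S.ncard : ℝ)) = ∑ v : V, if v ∈ S then (1:ℝ) else 0 := by
  rw [Finset.sum_boole]
  norm_cast
  rw [← Set.ncard_coe_finset]
  congr 1
  ext v
  simp

private lemma max_lt_aux {τ c s s' : ℝ} (hc : 0 < c)
    (h : max 0 (τ - s' / c) < max 0 (τ - s / c)) : s < s' := by
  have h1 : 0 < max 0 (τ - s / c) := lt_of_le_of_lt (le_max_left _ _) h
  have h2 : 0 < τ - s / c := by
    by_contra hcon
    push_neg at hcon
    rw [max_eq_left hcon] at h1
    exact lt_irrefl _ h1
  rw [max_eq_right (le_of_lt h2)] at h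
  have h3 : τ - s' / c < τ - s / c := lt_of_le_of_lt (le_max_right _ _) h
  have h4 : s / c < s' / c := by linarith
  have h5 := mul_lt_mul_of_pos_right h4 hc
  rw [div_mul_cancel₀ _ hc.ne', div_mul_cancel₀ _ hc.ne'] at h5
  exact h5

private lemma bool_ind_eq (t0 s t : Bool) :
    (if t = s then (0:ℝ) else 1)
      = (if s = t0 then (1:ℝ) else 0) + (if t = t0 then (1:ℝ) else 0)
        - 2 * ((if s = t0 then (1:ℝ) else 0) * (if t = t0 then (1:ℝ) else 0)) := by
  cases s <;> cases t <;> cases t0 <;> norm_num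


private lemma Fsum {V : Type*} [Fintype V] (η : V → V → ℝ) (k : ℝ)
    (hsymm : ∀ u v, η u v = η v u) (hrow : ∀ u, (∑ v : V, η u v) = k)
    (Q : V → Bool) (t0 : Bool) :
    (∑ u : V, ∑ v : V, η u v * (if Q v = Q u then (0:ℝ) else 1))
      = 2 * k * (∑ v : V, (if Q v = t0 then (1:ℝ) else 0))
        - 2 * ∑ u : V, (if Q u = t0 then (1:ℝ) else 0)
            * ∑ v : V, η u v * (if Q v = t0 then (1:ℝ) else 0) := by
  have hcol : (∑ u : V, ∑ v : V, η u v * (if Q v = t0 then (1:ℝ) else 0))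
      = k * ∑ v : V, (if Q v = t0 then (1:ℝ) else 0) := by
    rw [Finset.sum_comm]
    have e : ∀ v : V, (∑ u : V, η u v * (if Q v = t0 then (1:ℝ) else 0))
        = k * (if Q v = t0 then (1:ℝ) else 0) := by
      intro v
      rw [← Finset.sum_mul]
      have e2 : (∑ u : V, η u v) = k := by
        have e3 : (∑ u : V, η u v) = ∑ u : V, η v u :=
          Finset.sum_congr rfl fun u _ => hsymm u v
        rw [e3, hrow v]
      rw [e2, mul_comm]
    rw [Finset.sum_congr rfl fun v _ => e v, ← Finset.mul_sum]
  have e1 : ∀ u : V, (∑ v : V, η u v * (if Q v = Q u then (0:ℝ) else 1))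
      = (if Q u = t0 then (1:ℝ) else 0) * k
        + (∑ v : V, η u v * (if Q v = t0 then (1:ℝ) else 0))
        - 2 * ((if Q u = t0 then (1:ℝ) else 0)
            * ∑ v : V, η u v * (if Q v = t0 then (1:ℝ) else 0)) := by
    intro u
    have e0 : (∑ v : V, η u v * (if Q v = Q u then (0:ℝ) else 1))
        = ∑ v : V, (η u v * (if Q u = t0 then (1:ℝ) else 0)
            + η u v * (if Q v = t0 then (1:ℝ) else 0)
            - 2 * ((if Q u = t0 then (1:ℝ) else 0) * (η u v * (if Q v = t0 then (1:ℝ) else 0)))) :=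
      Finset.sum_congr rfl fun v _ => by rw [bool_ind_eq t0 (Q u) (Q v)]; ring
    rw [e0, Finset.sum_sub_distrib, Finset.sum_add_distrib, ← Finset.sum_mul,
      ← Finset.mul_sum, ← Finset.mul_sum, hrow u]
    ring
  rw [Finset.sum_congr rfl fun u _ => e1 u, Finset.sum_sub_distrib, Finset.sum_add_distrib,
    ← Finset.sum_mul, ← Finset.mul_sum, hcol]
  ring

private lemma core {V : Type*} [Fintype V] (η : V → V → ℝ) (a b : V)
    (hsymm : ∀ u v, η u v = η v u) (hdaa : η a a = 0) (hdbb : η b b = 0)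
    (χ χ' da db : V → ℝ)
    (hda : ∀ f : V → ℝ, (∑ v : V, f v * da v) = f a)
    (hdb : ∀ f : V → ℝ, (∑ v : V, f v * db v) = f b)
    (hflip : ∀ v, χ' v = χ v - da v + db v)
    (k F F' : ℝ)
    (hF : F = 2 * k * (∑ v : V, χ v) - 2 * ∑ u : V, χ u * ∑ v : V, η u v * χ v)
    (hF' : F' = 2 * k * (∑ v : V, χ' v) - 2 * ∑ u : V, χ' u * ∑ v : V, η u v * χ' v) :
    F' - F = -4 * ((∑ v : V, η b v * χ' v) - (∑ v : V, η a v * χ v)) := by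
  have hsda : (∑ v : V, da v) = 1 := by simpa using hda (fun _ => (1:ℝ))
  have hsdb : (∑ v : V, db v) = 1 := by simpa using hdb (fun _ => (1:ℝ))
  have hA : (∑ v : V, χ' v) = (∑ v : V, χ v) := by
    have e : (∑ v : V, χ' v) = ∑ v : V, (χ v - da v + db v) :=
      Finset.sum_congr rfl fun v _ => hflip v
    rw [e, Finset.sum_add_distrib, Finset.sum_sub_distrib, hsda, hsdb]
    ring
  have hMrow : ∀ u : V, (∑ v : V, η u v * χ' v) = (∑ v : V, η u v * χ v) - η u a + η u b := by
    intro u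
    have e : (∑ v : V, η u v * χ' v)
        = ∑ v : V, (η u v * χ v - η u v * da v + η u v * db v) :=
      Finset.sum_congr rfl fun v _ => by rw [hflip v]; ring
    have ca : (∑ v : V, η u v * da v) = η u a := hda (fun v => η u v)
    have cb : (∑ v : V, η u v * db v) = η u b := hdb (fun v => η u v)
    rw [e, Finset.sum_add_distrib, Finset.sum_sub_distrib, ca, cb]
  have hMb : (∑ v : V, η b v * χ' v) = (∑ v : V, η b v * χ v) - η b a := by
    rw [hMrow b, hdbb]; ring
  have hB : (∑ u : V, χ' u * ∑ v : V, η u v * χ' v)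
      = (∑ u : V, χ u * ∑ v : V, η u v * χ v)
        - 2 * (∑ v : V, η a v * χ v) + 2 * (∑ v : V, η b v * χ v) - 2 * η a b := by
    have e : (∑ u : V, χ' u * ∑ v : V, η u v * χ' v)
        = ∑ u : V, (χ u * ∑ v : V, η u v * χ v - χ u * η u a + χ u * η u b
            - ((∑ v : V, η u v * χ v) - η u a + η u b) * da u
            + ((∑ v : V, η u v * χ v) - η u a + η u b) * db u) :=
      Finset.sum_congr rfl fun u _ => by rw [hflip u, hMrow u]; ring
    have ca : (∑ u : V, ((∑ v : V, η u v * χ v) - η u a + η u b) * da u)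
        = (∑ v : V, η a v * χ v) - η a a + η a b := hda _
    have cb : (∑ u : V, ((∑ v : V, η u v * χ v) - η u a + η u b) * db u)
        = (∑ v : V, η b v * χ v) - η b a + η b b := hdb _
    have sa : (∑ u : V, χ u * η u a) = (∑ v : V, η a v * χ v) :=
      Finset.sum_congr rfl fun u _ => by rw [hsymm u a]; ring
    have sb : (∑ u : V, χ u * η u b) = (∑ v : V, η b v * χ v) :=
      Finset.sum_congr rfl fun u _ => by rw [hsymm u b]; ring
    have e2 : (∑ u : V, (χ u * ∑ v : V, η u v * χ v - χ u * η u a + χ u * η u b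
            - ((∑ v : V, η u v * χ v) - η u a + η u b) * da u
            + ((∑ v : V, η u v * χ v) - η u a + η u b) * db u))
        = ((∑ u : V, χ u * ∑ v : V, η u v * χ v) - (∑ u : V, χ u * η u a)
            + (∑ u : V, χ u * η u b))
          - (∑ u : V, ((∑ v : V, η u v * χ v) - η u a + η u b) * da u)
          + (∑ u : V, ((∑ v : V, η u v * χ v) - η u a + η u b) * db u) := by
      rw [Finset.sum_add_distrib, Finset.sum_sub_distrib, Finset.sum_add_distrib,
        Finset.sum_sub_distrib]
    rw [e, e2, ca, cb, sa, sb, hdaa, hdbb, hsymm b a]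
    ring
  rw [hA] at hF'
  linarith [hF, hF', hB, hMb, hsymm b a]
open SimpleGraph Finset Schelling

private lemma phi_swap_eq {V I : Type*} [Fintype V] [Fintype I] [DecidableEq I]
    (G : SimpleGraph V) (w : ℕ) (k : ℕ) (hreg : ∀ u : V, (nbhd G w u).ncard = k)
    (tp : I → Bool) (p : I → V) (hp : Function.Bijective p)
    (x y : I) (hxy : x ≠ y) (htp : tp x ≠ tp y) :
    Phi G w tp (swapP p x y) - Phi G w tp p
      = -2 * ((sCount G w tp (swapP p x y) x : ℝ) - (sCount G w tp p x : ℝ)) := by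
  classical
  set p' : I → V := swapP p x y with hp'def
  have hp' : Function.Bijective p' := hp.comp (Equiv.swap x y).bijective
  have hab : p x ≠ p y := fun h => hxy (hp.1 h)
  set q : V → Bool := fun v => tp ((Equiv.ofBijective p hp).symm v) with hqdef
  set q' : V → Bool := fun v => tp ((Equiv.ofBijective p' hp').symm v) with hq'def
  have hqp : ∀ z : I, q (p z) = tp z := by
    intro z
    show tp ((Equiv.ofBijective p hp).symm (p z)) = tp z
    rw [Equiv.ofBijective_symm_apply_apply]
  have hq'p : ∀ z : I, q' (p' z) = tp z := by
    intro z
    show tp ((Equiv.ofBijective p' hp').symm (p' z)) = tp z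
    rw [Equiv.ofBijective_symm_apply_apply]
  have hpx' : p' x = p y := by
    show p (Equiv.swap x y x) = p y
    rw [Equiv.swap_apply_left]
  have hpy' : p' y = p x := by
    show p (Equiv.swap x y y) = p x
    rw [Equiv.swap_apply_right]
  have hpz : ∀ v : V, p ((Equiv.ofBijective p hp).symm v) = v := fun v =>
    (Equiv.ofBijective p hp).apply_symm_apply v
  have hp'z : ∀ v : V, p' ((Equiv.ofBijective p' hp').symm v) = v := fun v =>
    (Equiv.ofBijective p' hp').apply_symm_apply v
  have hocc : ∀ (v : V) (t : Bool), (∃ z, p z = v ∧ tp z = t) ↔ q v = t := by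
    intro v t
    constructor
    · rintro ⟨z, rfl, ht⟩; rw [hqp]; exact ht
    · intro h; exact ⟨(Equiv.ofBijective p hp).symm v, hpz v, h⟩
  have hocc' : ∀ (v : V) (t : Bool), (∃ z, p' z = v ∧ tp z = t) ↔ q' v = t := by
    intro v t
    constructor
    · rintro ⟨z, rfl, ht⟩; rw [hq'p]; exact ht
    · intro h; exact ⟨(Equiv.ofBijective p' hp').symm v, hp'z v, h⟩
  have hqa : q (p x) = tp x := hqp x
  have hqb : q (p y) = tp y := hqp y
  have hq'a : q' (p x) = tp y := by rw [← hpy']; exact hq'p y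
  have hq'b : q' (p y) = tp x := by rw [← hpx']; exact hq'p x
  have hq'other : ∀ v : V, v ≠ p x → v ≠ p y → q' v = q v := by
    intro v hva hvb
    have hzx : (Equiv.ofBijective p hp).symm v ≠ x := fun h => hva (by rw [← hpz v, h])
    have hzy : (Equiv.ofBijective p hp).symm v ≠ y := fun h => hvb (by rw [← hpz v, h])
    have h2 : p' ((Equiv.ofBijective p hp).symm v) = v := by
      show p (Equiv.swap x y ((Equiv.ofBijective p hp).symm v)) = v
      rw [Equiv.swap_apply_of_ne_of_ne hzx hzy]
      exact hpz v
    show q' v = tp ((Equiv.ofBijective p hp).symm v)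
    conv_lhs => rw [← h2]
    exact hq'p _
  -- counting conversions
  have hcountS : ∀ (P : I → V) (Q : V → Bool),
      (∀ v t, (∃ z, P z = v ∧ tp z = t) ↔ Q v = t) → ∀ z : I,
      (sCount G w tp P z : ℝ) = ∑ v : V,
        (if v ∈ nbhd G w (P z) then (1:ℝ) else 0) * (if Q v = tp z then (1:ℝ) else 0) := by
    intro P Q hQ z
    unfold sCount
    rw [ncard_cast_sum]
    refine Finset.sum_congr rfl fun v _ => ?_
    by_cases h1 : v ∈ nbhd G w (P z) <;> by_cases h2 : Q v = tp z <;>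
      simp [h1, h2, Set.mem_setOf_eq, hQ v (tp z)]
  have hcountD : ∀ (P : I → V) (Q : V → Bool),
      (∀ v t, (∃ z, P z = v ∧ tp z = t) ↔ Q v = t) → ∀ z : I,
      (dCount G w tp P z : ℝ) = ∑ v : V,
        (if v ∈ nbhd G w (P z) then (1:ℝ) else 0) * (if Q v = tp z then (0:ℝ) else 1) := by
    intro P Q hQ z
    have hne : ∀ v, (∃ z', P z' = v ∧ tp z' ≠ tp z) ↔ Q v ≠ tp z := by
      intro v
      constructor
      · rintro ⟨z', rfl, h⟩
        rw [(hQ (P z') (tp z')).mp ⟨z', rfl, rfl⟩]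
        exact h
      · intro h
        obtain ⟨z', hz', ht⟩ := (hQ v (Q v)).mpr rfl
        exact ⟨z', hz', by rw [ht]; exact h⟩
    unfold dCount
    rw [ncard_cast_sum]
    refine Finset.sum_congr rfl fun v _ => ?_
    by_cases h1 : v ∈ nbhd G w (P z) <;> by_cases h2 : Q v = tp z <;>
      simp [h1, h2, Set.mem_setOf_eq, hne v]
  -- eta facts
  have hsymmE : ∀ u v : V, (if v ∈ nbhd G w u then (1:ℝ) else 0)
      = (if u ∈ nbhd G w v then (1:ℝ) else 0) := by
    intro u v
    have h : v ∈ nbhd G w u ↔ u ∈ nbhd G w v := by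
      unfold nbhd
      simp only [Set.mem_setOf_eq]
      rw [SimpleGraph.dist_comm]
      exact ⟨fun ⟨h1, h2⟩ => ⟨h1.symm, h2⟩, fun ⟨h1, h2⟩ => ⟨h1.symm, h2⟩⟩
    simp only [h]
  have hdiagE : ∀ u : V, (if u ∈ nbhd G w u then (1:ℝ) else 0) = 0 := by
    intro u; simp [nbhd]
  have hrowE : ∀ u : V, (∑ v : V, (if v ∈ nbhd G w u then (1:ℝ) else 0)) = (k : ℝ) := by
    intro u
    rw [← ncard_cast_sum (nbhd G w u), hreg u]
  have hdel : ∀ (c : V) (f : V → ℝ),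
      (∑ v : V, f v * (if v = c then (1:ℝ) else 0)) = f c := by
    intro c f
    have e : ∀ v : V, f v * (if v = c then (1:ℝ) else 0) = if v = c then f v else 0 := by
      intro v; by_cases h : v = c <;> simp [h]
    rw [Finset.sum_congr rfl fun v _ => e v, Finset.sum_ite_eq' Finset.univ c f]
    simp
  have hflip : ∀ v : V, (if q' v = tp x then (1:ℝ) else 0)
      = (if q v = tp x then (1:ℝ) else 0) - (if v = p x then (1:ℝ) else 0)
        + (if v = p y then (1:ℝ) else 0) := by
    intro v
    rcases eq_or_ne v (p x) with rfl | hva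
    · rw [hq'a, hqa, if_neg (Ne.symm htp), if_pos rfl, if_pos rfl, if_neg hab]
      norm_num
    · rcases eq_or_ne v (p y) with rfl | hvb
      · rw [hq'b, hqb, if_pos rfl, if_neg (Ne.symm htp), if_neg (Ne.symm hab), if_pos rfl]
        norm_num
      · rw [hq'other v hva hvb, if_neg hva, if_neg hvb]
        ring
  -- sCounts as sums
  have hsx : (sCount G w tp p x : ℝ) = ∑ v : V,
      (if v ∈ nbhd G w (p x) then (1:ℝ) else 0) * (if q v = tp x then (1:ℝ) else 0) :=
    hcountS p q hocc x
  have hsx' : (sCount G w tp p' x : ℝ) = ∑ v : V,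
      (if v ∈ nbhd G w (p y) then (1:ℝ) else 0) * (if q' v = tp x then (1:ℝ) else 0) := by
    have h := hcountS p' q' hocc' x
    rwa [hpx'] at h
  -- Phi as double sums
  have hPhi1 : Phi G w tp p = (1/2) * ∑ u : V, ∑ v : V,
      (if v ∈ nbhd G w u then (1:ℝ) else 0) * (if q v = q u then (0:ℝ) else 1) := by
    unfold Phi
    congr 1
    refine Fintype.sum_bijective p hp _ _ fun z => ?_
    rw [hqp z]
    exact hcountD p q hocc z
  have hPhi2 : Phi G w tp p' = (1/2) * ∑ u : V, ∑ v : V,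
      (if v ∈ nbhd G w u then (1:ℝ) else 0) * (if q' v = q' u then (0:ℝ) else 1) := by
    unfold Phi
    congr 1
    refine Fintype.sum_bijective p' hp' _ _ fun z => ?_
    rw [hq'p z]
    exact hcountD p' q' hocc' z
  have hF1 : (∑ u : V, ∑ v : V,
      (if v ∈ nbhd G w u then (1:ℝ) else 0) * (if q v = q u then (0:ℝ) else 1))
      = 2 * (k:ℝ) * (∑ v : V, (if q v = tp x then (1:ℝ) else 0))
        - 2 * ∑ u : V, (if q u = tp x then (1:ℝ) else 0)
            * ∑ v : V, (if v ∈ nbhd G w u then (1:ℝ) else 0) * (if q v = tp x then (1:ℝ) else 0) :=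
    Fsum _ _ hsymmE hrowE q (tp x)
  have hF2 : (∑ u : V, ∑ v : V,
      (if v ∈ nbhd G w u then (1:ℝ) else 0) * (if q' v = q' u then (0:ℝ) else 1))
      = 2 * (k:ℝ) * (∑ v : V, (if q' v = tp x then (1:ℝ) else 0))
        - 2 * ∑ u : V, (if q' u = tp x then (1:ℝ) else 0)
            * ∑ v : V, (if v ∈ nbhd G w u then (1:ℝ) else 0) * (if q' v = tp x then (1:ℝ) else 0) :=
    Fsum _ _ hsymmE hrowE q' (tp x)
  have hcore : (∑ u : V, ∑ v : V,
      (if v ∈ nbhd G w u then (1:ℝ) else 0) * (if q' v = q' u then (0:ℝ) else 1))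
      - (∑ u : V, ∑ v : V,
      (if v ∈ nbhd G w u then (1:ℝ) else 0) * (if q v = q u then (0:ℝ) else 1))
      = -4 * ((∑ v : V, (if v ∈ nbhd G w (p y) then (1:ℝ) else 0) * (if q' v = tp x then (1:ℝ) else 0))
          - (∑ v : V, (if v ∈ nbhd G w (p x) then (1:ℝ) else 0) * (if q v = tp x then (1:ℝ) else 0))) :=
    core (fun u v => if v ∈ nbhd G w u then (1:ℝ) else 0) (p x) (p y)
      hsymmE (hdiagE (p x)) (hdiagE (p y))
      (fun v => if q v = tp x then (1:ℝ) else 0) (fun v => if q' v = tp x then (1:ℝ) else 0)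
      (fun v => if v = p x then (1:ℝ) else 0) (fun v => if v = p y then (1:ℝ) else 0)
      (hdel (p x)) (hdel (p y)) hflip (k:ℝ) _ _ hF1 hF2
  rw [hPhi1, hPhi2, hsx, hsx']
  linarith [hcore]


private lemma count_add {V I : Type*} [Fintype V] (G : SimpleGraph V) (w : ℕ)
    (tp : I → Bool) (p : I → V) (hp : Function.Bijective p) (z : I) :
    sCount G w tp p z + dCount G w tp p z = (nbhd G w (p z)).ncard := by
  classical
  have hdisj : Disjoint {v | v ∈ nbhd G w (p z) ∧ ∃ y, p y = v ∧ tp y = tp z}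
      {v | v ∈ nbhd G w (p z) ∧ ∃ y, p y = v ∧ tp y ≠ tp z} := by
    rw [Set.disjoint_left]
    rintro v ⟨h1, z1, hz1, ht1⟩ ⟨h2, z2, hz2, ht2⟩
    have : z1 = z2 := hp.1 (hz1.trans hz2.symm)
    exact ht2 (this ▸ ht1)
  have hU : {v | v ∈ nbhd G w (p z) ∧ ∃ y, p y = v ∧ tp y = tp z}
      ∪ {v | v ∈ nbhd G w (p z) ∧ ∃ y, p y = v ∧ tp y ≠ tp z} = nbhd G w (p z) := by
    ext v
    simp only [Set.mem_union, Set.mem_setOf_eq]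
    constructor
    · rintro (⟨h1, _⟩ | ⟨h1, _⟩) <;> exact h1
    · intro hv
      obtain ⟨z', hz'⟩ := hp.2 v
      by_cases ht : tp z' = tp z
      · exact Or.inl ⟨hv, z', hz', ht⟩
      · exact Or.inr ⟨hv, z', hz', ht⟩
  have h2 := Set.ncard_union_eq hdisj (Set.toFinite _) (Set.toFinite _)
  rw [hU] at h2
  exact h2.symm


theorem cfSSG_regular_Phi_is_potential {V I : Type*} [Fintype V] [Fintype I] [DecidableEq I]
    (G : SimpleGraph V) (hG : G.Connected)
    (w : ℕ) (hw : 1 ≤ w)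
    (k : ℕ) (hreg : ∀ u : V, (nbhd G w u).ncard = k)
    (τ : ℝ) (hτ0 : 0 ≤ τ) (hτ1 : τ ≤ 1)
    (tp : I → Bool) (hA : 2 ≤ (typeA tp).card) (hB : 2 ≤ (typeB tp).card)
    (fav : I → V) (hfav : ∃ v0 : V, ∀ i : I, fav i = v0)
    (p : I → V) (hp : Function.Bijective p)
    (x y : I)
    (hx : toLex (vcost G w τ tp fav (swapP p x y) x) < toLex (vcost G w τ tp fav p x))
    (hy : toLex (vcost G w τ tp fav (swapP p x y) y) < toLex (vcost G w τ tp fav p y)) :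
    Phi G w tp (swapP p x y) < Phi G w tp p := by
  classical
  obtain ⟨v0, hfav0⟩ := hfav
  -- x ≠ y
  have hxy : x ≠ y := by
    rintro rfl
    have : swapP p x x = p := by
      funext z
      show p (Equiv.swap x x z) = p z
      rw [Equiv.swap_self]
      rfl
    rw [this] at hx
    exact lt_irrefl _ hx
  have hp' : Function.Bijective (swapP p x y) := hp.comp (Equiv.swap x y).bijective
  have hpx' : swapP p x y x = p y := by
    show p (Equiv.swap x y x) = p y
    rw [Equiv.swap_apply_left]
  have hpy' : swapP p x y y = p x := by
    show p (Equiv.swap x y y) = p x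
    rw [Equiv.swap_apply_right]
  -- different types
  have htp : tp x ≠ tp y := by
    intro htpeq
    have htps : ∀ z : I, tp (Equiv.swap x y z) = tp z := by
      intro z
      rcases eq_or_ne z x with rfl | hzx
      · rw [Equiv.swap_apply_left]; exact htpeq.symm
      · rcases eq_or_ne z y with rfl | hzy
        · rw [Equiv.swap_apply_right]; exact htpeq
        · rw [Equiv.swap_apply_of_ne_of_ne hzx hzy]
    have hexists : ∀ (v : V) (Pr : Bool → Prop),
        (∃ z, swapP p x y z = v ∧ Pr (tp z)) ↔ (∃ z, p z = v ∧ Pr (tp z)) := by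
      intro v Pr
      constructor
      · rintro ⟨z, hz, ht⟩
        refine ⟨Equiv.swap x y z, hz, ?_⟩
        rw [htps]; exact ht
      · rintro ⟨z, hz, ht⟩
        refine ⟨Equiv.swap x y z, ?_, by rw [htps]; exact ht⟩
        show p (Equiv.swap x y (Equiv.swap x y z)) = v
        rw [Equiv.swap_apply_self]; exact hz
    have hsx : sCount G w tp (swapP p x y) x = sCount G w tp p y := by
      unfold sCount
      rw [hpx', htpeq]
      congr 1
      ext v
      simp only [Set.mem_setOf_eq]
      exact and_congr_right fun _ => hexists v (fun t => t = tp y)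
    have hdx : dCount G w tp (swapP p x y) x = dCount G w tp p y := by
      unfold dCount
      rw [hpx', htpeq]
      congr 1
      ext v
      simp only [Set.mem_setOf_eq]
      exact and_congr_right fun _ => hexists v (fun t => t ≠ tp y)
    have hsy : sCount G w tp (swapP p x y) y = sCount G w tp p x := by
      unfold sCount
      rw [hpy', ← htpeq]
      congr 1
      ext v
      simp only [Set.mem_setOf_eq]
      exact and_congr_right fun _ => hexists v (fun t => t = tp x)
    have hdy : dCount G w tp (swapP p x y) y = dCount G w tp p x := by
      unfold dCount
      rw [hpy', ← htpeq]
      congr 1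
      ext v
      simp only [Set.mem_setOf_eq]
      exact and_congr_right fun _ => hexists v (fun t => t ≠ tp x)
    have hvx : vcost G w τ tp fav (swapP p x y) x = vcost G w τ tp fav p y := by
      unfold vcost ucost
      rw [hsx, hdx, hpx', hfav0 x, hfav0 y]
    have hvy : vcost G w τ tp fav (swapP p x y) y = vcost G w τ tp fav p x := by
      unfold vcost ucost
      rw [hsy, hdy, hpy', hfav0 x, hfav0 y]
    rw [hvx] at hx
    rw [hvy] at hy
    exact lt_asymm hx hy
  -- k ≥ 1
  have hk : 1 ≤ k := by
    obtain ⟨i, hi, j, hj, hij⟩ := Finset.one_lt_card.mp hA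
    have hpij : p i ≠ p j := fun h => hij (hp.1 h)
    obtain ⟨W⟩ := hG.preconnected (p i) (p j)
    have hWnn : ¬ W.Nil := SimpleGraph.Walk.not_nil_of_ne hpij
    have hadj : G.Adj (p i) (W.getVert 1) := W.adj_snd hWnn
    have hd : G.dist (p i) (W.getVert 1) ≤ w := by
      have h1 : G.dist (p i) (W.getVert 1)
          ≤ (SimpleGraph.Walk.cons hadj SimpleGraph.Walk.nil).length :=
        SimpleGraph.dist_le _
      simp at h1
      omega
    have hv : W.getVert 1 ∈ nbhd G w (p i) := ⟨hadj.ne', hd⟩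
    have h1 : 0 < (nbhd G w (p i)).ncard := (Set.ncard_pos (Set.toFinite _)).mpr ⟨_, hv⟩
    rw [hreg (p i)] at h1
    omega
  have hk0 : k ≠ 0 := by omega
  have hkR : (0:ℝ) < (k:ℝ) := by exact_mod_cast Nat.pos_of_ne_zero hk0
  have hsd : ∀ z : I, sCount G w tp p z + dCount G w tp p z = k := by
    intro z; rw [count_add G w tp p hp z, hreg]
  have hsd' : ∀ z : I, sCount G w tp (swapP p x y) z + dCount G w tp (swapP p x y) z = k := by
    intro z; rw [count_add G w tp (swapP p x y) hp' z, hreg]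
  -- ucost decrease forces sCount increase
  have humain : ∀ z : I, ucost G w τ tp (swapP p x y) z < ucost G w τ tp p z →
      (sCount G w tp p z : ℝ) < (sCount G w tp (swapP p x y) z : ℝ) := by
    intro z hz
    have h1 := hsd z
    have h2 := hsd' z
    simp only [ucost, h1, h2] at hz
    rw [if_neg hk0, if_neg hk0] at hz
    have hc1 : (sCount G w tp p z : ℝ) + (dCount G w tp p z : ℝ) = (k : ℝ) := by
      exact_mod_cast h1
    have hc2 : (sCount G w tp (swapP p x y) z : ℝ) + (dCount G w tp (swapP p x y) z : ℝ)
        = (k : ℝ) := by exact_mod_cast h2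
    rw [hc1, hc2] at hz
    exact max_lt_aux hkR hz
  -- potential identities
  have hΦx := phi_swap_eq G w k hreg tp p hp x y hxy htp
  have hΦy := phi_swap_eq G w k hreg tp p hp y x (Ne.symm hxy) (Ne.symm htp)
  have hswapcomm : swapP p y x = swapP p x y := by
    funext z
    show p (Equiv.swap y x z) = p (Equiv.swap x y z)
    rw [Equiv.swap_comm]
  rw [hswapcomm] at hΦy
  -- lex analysis
  rw [Prod.Lex.lt_iff] at hx hy
  simp only [vcost] at hx hy
  rcases hx with hx1 | ⟨hx1, hx2⟩
  · have := humain x hx1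
    linarith [hΦx]
  · rcases hy with hy1 | ⟨hy1, hy2⟩
    · have := humain y hy1
      linarith [hΦy]
    · exfalso
      rw [hpx', hfav0 x] at hx2
      rw [hpy', hfav0 y] at hy2
      simp only [ofLex_toLex] at hx2 hy2
      omega
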